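/- In the honeypot signaling game, there is no separating perfect Bayesian Nash equilibrium: no strategy profile in which the sender plays distinct pure messages for the two types, together with Bayes-consistent beliefs, can satisfy the sender's best-response condition for both types. -/

import Mathlib

/-- Perfect Bayesian Nash equilibrium for the binary cheap-talk honeypot signaling game.
`σS n m` is the probability the sender sends message `n` given type `m`,
`σR y n` the probability the receiver plays action `y` after message `n`,
`μ m n` the receiver's posterior belief of type `m` after message `n`,
`p` the prior over types, `uS uR y m` the payoffs. -/
def IsPBE (p : Fin 2 → ℝ) (uS uR : Fin 2 → Fin 2 → ℝ)
    (σS σR μ : Fin 2 → Fin 2 → ℝ) : Prop :=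
  -- strategies and beliefs are probability distributions
  (∀ m, 0 ≤ σS 0 m ∧ 0 ≤ σS 1 m ∧ σS 0 m + σS 1 m = 1) ∧
  (∀ n, 0 ≤ σR 0 n ∧ 0 ≤ σR 1 n ∧ σR 0 n + σR 1 n = 1) ∧
  (∀ n, 0 ≤ μ 0 n ∧ 0 ≤ μ 1 n ∧ μ 0 n + μ 1 n = 1) ∧
  -- sender optimality: for each type, the mixed strategy does at least as well
  -- as any pure message
  (∀ m n', (∑ n : Fin 2, σS n m * ∑ y : Fin 2, σR y n * uS y m) ≥
      ∑ y : Fin 2, σR y n' * uS y m) ∧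
  -- receiver optimality given beliefs, after every message
  (∀ n y', (∑ y : Fin 2, σR y n * ∑ m : Fin 2, μ m n * uR y m) ≥
      ∑ m : Fin 2, μ m n * uR y' m) ∧
  -- Bayes-consistency of beliefs on messages sent with positive probability
  (∀ m n, (∑ m' : Fin 2, σS n m' * p m') > 0 →
      μ m n = σS n m * p m / ∑ m' : Fin 2, σS n m' * p m')

/-- No separating PBE exists in the honeypot game. -/
theorem no_separating_equilibrium
    (p : Fin 2 → ℝ) (uS uR : Fin 2 → Fin 2 → ℝ)
    (hp0 : 0 < p 0) (hp1 : p 0 < 1) (hpsum : p 0 + p 1 = 1)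
    (hS0 : uS 0 0 > uS 1 0) (hS1 : uS 1 1 > uS 0 1)
    (hR0 : uR 1 0 > uR 0 0) (hR1 : uR 0 1 > uR 1 1) :
    ¬ ∃ (σS σR μ : Fin 2 → Fin 2 → ℝ) (f : Fin 2 → Fin 2),
        Function.Injective f ∧
        (∀ m n, σS n m = if n = f m then 1 else 0) ∧
        IsPBE p uS uR σS σR μ := by
  rintro ⟨σS, σR, μ, f, hinj, hsep, hSprob, hRprob, hμprob, hSopt, hRopt, hbayes⟩
  have hab : f 0 ≠ f 1 := fun h => absurd (hinj h) (by decide)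
  have key : ∀ (a b : Fin 2), a ≠ b → ∀ g : Fin 2 → ℝ,
      (∑ n : Fin 2, g n) = g a + g b := by
    intro a b h g
    fin_cases a <;> fin_cases b <;> simp [Fin.sum_univ_two] at h ⊢ <;> ring
  -- sender pure strategy values
  have s00 : σS (f 0) 0 = 1 := by rw [hsep]; simp
  have s10 : σS (f 1) 0 = 0 := by rw [hsep]; simp [hab.symm]
  have s01 : σS (f 0) 1 = 0 := by rw [hsep]; simp [hab]
  have s11 : σS (f 1) 1 = 1 := by rw [hsep]; simp
  have hp1' : 0 < p 1 := by linarith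
  -- Bayes denominators
  have d0 : (∑ m' : Fin 2, σS (f 0) m' * p m') = p 0 := by
    rw [Fin.sum_univ_two, s00, s01]; ring
  have d1 : (∑ m' : Fin 2, σS (f 1) m' * p m') = p 1 := by
    rw [Fin.sum_univ_two, s10, s11]; ring
  -- beliefs
  have μ00 : μ 0 (f 0) = 1 := by
    have := hbayes 0 (f 0) (by rw [d0]; exact hp0)
    rw [d0, s00] at this; rw [this]; field_simp
  have μ10 : μ 1 (f 0) = 0 := by
    have := hbayes 1 (f 0) (by rw [d0]; exact hp0)
    rw [d0, s01] at this; rw [this]; ring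
  have μ11 : μ 1 (f 1) = 1 := by
    have := hbayes 1 (f 1) (by rw [d1]; exact hp1')
    rw [d1, s11] at this; rw [this]; field_simp
  have μ01 : μ 0 (f 1) = 0 := by
    have := hbayes 0 (f 1) (by rw [d1]; exact hp1')
    rw [d1, s10] at this; rw [this]; ring
  -- receiver attacks after message f 0
  have hR0opt := hRopt (f 0) 1
  rw [Fin.sum_univ_two, Fin.sum_univ_two, Fin.sum_univ_two, μ00, μ10] at hR0opt
  obtain ⟨hr00, hr10, hrs0⟩ := hRprob (f 0)
  have e0 : σR 1 (f 0) = 1 - σR 0 (f 0) := by linarith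
  rw [e0] at hR0opt
  have r00 : σR 0 (f 0) = 0 := by
    by_contra h
    have hpos : 0 < σR 0 (f 0) := lt_of_le_of_ne hr00 (Ne.symm h)
    have hm := mul_pos hpos (by linarith : (0:ℝ) < uR 1 0 - uR 0 0)
    nlinarith [hR0opt, hm]
  have r10 : σR 1 (f 0) = 1 := by linarith
  -- receiver withdraws after message f 1
  have hR1opt := hRopt (f 1) 0
  rw [Fin.sum_univ_two, Fin.sum_univ_two, Fin.sum_univ_two, μ01, μ11] at hR1opt
  obtain ⟨hr01, hr11, hrs1⟩ := hRprob (f 1)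
  have e1 : σR 1 (f 1) = 1 - σR 0 (f 1) := by linarith
  rw [e1] at hR1opt
  have r01 : σR 0 (f 1) = 1 := by
    by_contra h
    have hlt : σR 0 (f 1) < 1 := lt_of_le_of_ne (by linarith) h
    have hm := mul_pos (by linarith : (0:ℝ) < 1 - σR 0 (f 1))
      (by linarith : (0:ℝ) < uR 0 1 - uR 1 1)
    nlinarith [hR1opt, hm]
  have r11 : σR 1 (f 1) = 0 := by linarith
  -- sender of type 0 would deviate to message f 1
  have hdev := hSopt 0 (f 1)
  rw [key (f 0) (f 1) hab] at hdev
  simp only [Fin.sum_univ_two, s00, s10, r00, r10, r01, r11] at hdev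
  linarith
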